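/- The Bachelier call price formula: if S_T = S + σ√τ · Z where Z is a standard normal random variable, σ > 0, τ > 0, then E[(S_T − K)_+] = (S − K)·Φ((S−K)/(σ√τ)) + σ√τ·φ((S−K)/(σ√τ)), where φ and Φ are the standard normal pdf and cdf. -/

import Mathlib

open MeasureTheory ProbabilityTheory Real Filter Topology

lemma my_int_phi : Integrable (fun x : ℝ => Real.exp (-x ^ 2 / 2) / Real.sqrt (2 * Real.pi)) := by
  have h : Integrable (fun x : ℝ => Real.exp (-(1/2 : ℝ) * x ^ 2)) :=
    integrable_exp_neg_mul_sq (by norm_num)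
  have := h.div_const (Real.sqrt (2 * Real.pi))
  exact this.congr (Filter.Eventually.of_forall fun x => by ring_nf)

lemma my_int_xphi : Integrable (fun x : ℝ => x * (Real.exp (-x ^ 2 / 2) / Real.sqrt (2 * Real.pi))) := by
  have h : Integrable (fun x : ℝ => x * Real.exp (-(1/2 : ℝ) * x ^ 2)) :=
    integrable_mul_exp_neg_mul_sq (by norm_num)
  have := h.div_const (Real.sqrt (2 * Real.pi))
  exact this.congr (Filter.Eventually.of_forall fun x => by ring_nf)

/-- Bachelier call price formula: if `S_T = S + σ√τ Z` with `Z` standard normal,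
then `E[(S_T − K)_+] = (S−K)Φ(d) + σ√τ φ(d)` with `d = (S−K)/(σ√τ)`,
`φ` and `Φ` the standard normal pdf and cdf. -/
theorem stmt_7 (S K σ τ : ℝ) (hσ : 0 < σ) (hτ : 0 < τ)
    (φ Φ : ℝ → ℝ)
    (hφ : ∀ u, φ u = Real.exp (-u ^ 2 / 2) / Real.sqrt (2 * Real.pi))
    (hΦ : ∀ u, Φ u = ∫ x in Set.Iic u, φ x) :
    (∫ z, max (S + σ * Real.sqrt τ * z - K) 0 ∂(gaussianReal 0 1))
      = (S - K) * Φ ((S - K) / (σ * Real.sqrt τ))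
        + σ * Real.sqrt τ * φ ((S - K) / (σ * Real.sqrt τ)) := by
  set a : ℝ := σ * Real.sqrt τ with ha_def
  have ha : 0 < a := mul_pos hσ (Real.sqrt_pos.mpr hτ)
  set c : ℝ := S - K with hc_def
  set d : ℝ := c / a with hd_def
  -- pdf identification
  have hpdf : ∀ x, gaussianPDFReal 0 1 x = φ x := by
    intro x
    rw [hφ, gaussianPDFReal]
    push_cast
    rw [mul_one, sub_zero, inv_mul_eq_div]
    norm_num
  have hφ_nonneg : ∀ x, 0 ≤ φ x := by
    intro x; rw [hφ]; positivity
  have hφ_even : ∀ x, φ (-x) = φ x := by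
    intro x; rw [hφ, hφ]; ring_nf
  have hφ_int : Integrable φ := by
    exact my_int_phi.congr (Filter.Eventually.of_forall fun x => (hφ x).symm)
  have hxφ_int : Integrable (fun x => x * φ x) := by
    exact my_int_xphi.congr (Filter.Eventually.of_forall fun x => by simp only [hφ])
  -- reduce gaussian integral to Lebesgue integral
  have h1 : (∫ z, max (S + a * z - K) 0 ∂(gaussianReal 0 1))
      = ∫ z, φ z * max (S + a * z - K) 0 := by
    rw [gaussianReal_of_var_ne_zero 0 one_ne_zero]
    have : gaussianPDF 0 1 = fun x => ((gaussianPDFReal 0 1 x).toNNReal : ENNReal) := rfl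
    rw [this, integral_withDensity_eq_integral_smul
      ((measurable_gaussianPDFReal 0 1).real_toNNReal)]
    congr 1
    funext x
    rw [NNReal.smul_def, Real.coe_toNNReal _ (gaussianPDFReal_nonneg 0 1 x), hpdf, smul_eq_mul]
  -- indicator form
  have h2 : (fun z => φ z * max (S + a * z - K) 0)
      = Set.indicator (Set.Ioi (-d)) (fun z => φ z * (a * z + c)) := by
    funext z
    by_cases h : -d < z
    · have hz' : z ∈ Set.Ioi (-d) := Set.mem_Ioi.mpr h
      rw [Set.indicator_of_mem hz']
      have hz : 0 < a * z + c := by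
        have : -c < a * z := by
          have := (mul_lt_mul_iff_right₀ ha).mpr h
          rw [mul_neg, hd_def, mul_div_cancel₀ _ ha.ne'] at this
          linarith
        linarith
      rw [max_eq_left (by linarith)]
      rw [hc_def]; ring
    · have hz' : z ∉ Set.Ioi (-d) := fun hh => h (Set.mem_Ioi.mp hh)
      rw [Set.indicator_of_notMem hz']
      push_neg at h
      have hz : a * z + c ≤ 0 := by
        have : a * z ≤ -c := by
          have := (mul_le_mul_iff_right₀ ha).mpr h
          rw [mul_neg, hd_def, mul_div_cancel₀ _ ha.ne'] at this
          linarith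
        linarith
      rw [max_eq_right (by linarith), mul_zero]
  -- the two key integrals
  have hI1 : (∫ z in Set.Ioi (-d), z * φ z) = φ d := by
    have hderiv : ∀ x ∈ Set.Ici (-d), HasDerivAt (fun z => -φ z) (x * φ x) x := by
      intro x _
      have h0 : HasDerivAt (fun z : ℝ => -z ^ 2 / 2) (-x) x := by
        have := ((hasDerivAt_pow 2 x).neg).div_const 2
        simpa using this.congr_deriv (by push_cast; ring)
      have h1 := ((h0.exp).div_const (Real.sqrt (2 * Real.pi))).neg
      have : (fun z => -φ z) = fun z => -(Real.exp (-z ^ 2 / 2) / Real.sqrt (2 * Real.pi)) := by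
        funext z; rw [hφ]
      rw [this, hφ]
      exact h1.congr_deriv (by ring)
    have htend : Tendsto (fun z => -φ z) atTop (𝓝 0) := by
      have h0 : Tendsto (fun z : ℝ => Real.exp (-z ^ 2 / 2)) atTop (𝓝 0) := by
        have hsq : Tendsto (fun z : ℝ => z ^ 2 / 2) atTop atTop :=
          (tendsto_pow_atTop two_ne_zero).atTop_div_const (by norm_num)
        have := (Real.tendsto_exp_neg_atTop_nhds_zero).comp hsq
        refine this.congr fun z => ?_
        simp [Function.comp, neg_div]
      have : Tendsto (fun z : ℝ => -(Real.exp (-z ^ 2 / 2) / Real.sqrt (2 * Real.pi)))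
          atTop (𝓝 0) := by
        simpa using ((h0.div_const (Real.sqrt (2 * Real.pi))).neg)
      refine this.congr fun z => ?_
      rw [hφ]
    rw [integral_Ioi_of_hasDerivAt_of_tendsto' hderiv hxφ_int.integrableOn htend]
    rw [zero_sub, neg_neg, hφ_even]
  have hI2 : (∫ z in Set.Ioi (-d), φ z) = Φ d := by
    have : (∫ z in Set.Ioi (-d), φ z) = ∫ z in Set.Ioi (-d), φ (-z) := by
      congr 1; funext z; rw [hφ_even]
    rw [this, integral_comp_neg_Ioi, neg_neg, hΦ]
  -- put it together
  rw [show σ * Real.sqrt τ = a from rfl] at *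
  rw [h1, h2, integral_indicator measurableSet_Ioi]
  have hsplit : (∫ z in Set.Ioi (-d), φ z * (a * z + c))
      = a * (∫ z in Set.Ioi (-d), z * φ z) + c * (∫ z in Set.Ioi (-d), φ z) := by
    rw [← integral_const_mul, ← integral_const_mul, ← integral_add
      ((hxφ_int.const_mul a).integrableOn) ((hφ_int.const_mul c).integrableOn)]
    congr 1; funext z; ring
  rw [hsplit, hI1, hI2]
  ring
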